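/- Let 0 < δ < 1/2 and V₁ > 0. Then the equilibrium E_W = (V₁/(1−δ), 0) of the two-dimensional ring system is globally asymptotically stable: for every differentiable function r = (r₁, r₂) : [0, ∞) → ℝ² satisfying r₁'(t) = −r₁(t) + F(δ(r₁(t) − r₂(t)) + V₁) and r₂'(t) = −r₂(t) + F(δ(r₂(t) − r₁(t))) for all t ≥ 0, one has r(t) → (V₁/(1−δ), 0) as t → ∞. -/

import Mathlib

open Filter

/-- Global asymptotic stability of `E_W = (V₁/(1-δ), 0)` for the
two-dimensional ring system when `0 < δ < 1/2` and `V₁ > 0`: every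
solution defined on `[0,∞)` converges to `E_W`. -/
theorem stmt1 (δ V₁ : ℝ) (hδ0 : 0 < δ) (hδ : δ < 1/2) (hV : 0 < V₁)
    (r₁ r₂ : ℝ → ℝ)
    (h₁ : ∀ t ≥ (0 : ℝ), HasDerivAt r₁ (-r₁ t + max (δ * (r₁ t - r₂ t) + V₁) 0) t)
    (h₂ : ∀ t ≥ (0 : ℝ), HasDerivAt r₂ (-r₂ t + max (δ * (r₂ t - r₁ t)) 0) t) :
    Tendsto (fun t => (r₁ t, r₂ t)) atTop (nhds (V₁ / (1 - δ), 0)) := by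
  set c := V₁ / (1 - δ) with hc
  have h1δ : (0:ℝ) < 1 - δ := by linarith
  have hcpos : 0 < c := div_pos hV h1δ
  have hceq : δ * c + V₁ = c := by
    rw [hc]; field_simp; ring
  set g : ℝ → ℝ × ℝ := fun t => (Real.exp t * (r₁ t - c), Real.exp t * r₂ t) with hg
  set g' : ℝ → ℝ × ℝ := fun t =>
    (Real.exp t * (max (δ * (r₁ t - r₂ t) + V₁) 0 - c),
     Real.exp t * (max (δ * (r₂ t - r₁ t)) 0)) with hg'def
  have hg' : ∀ t ≥ (0:ℝ), HasDerivAt g (g' t) t := by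
    intro t ht
    have d1 : HasDerivAt (fun t => Real.exp t * (r₁ t - c))
        (Real.exp t * (r₁ t - c) + Real.exp t * (-r₁ t + max (δ * (r₁ t - r₂ t) + V₁) 0)) t :=
      (Real.hasDerivAt_exp t).mul ((h₁ t ht).sub_const c)
    have d2 : HasDerivAt (fun t => Real.exp t * r₂ t)
        (Real.exp t * r₂ t + Real.exp t * (-r₂ t + max (δ * (r₂ t - r₁ t)) 0)) t :=
      (Real.hasDerivAt_exp t).mul (h₂ t ht)
    have heq : g' t = (Real.exp t * (r₁ t - c) + Real.exp t * (-r₁ t + max (δ * (r₁ t - r₂ t) + V₁) 0),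
        Real.exp t * r₂ t + Real.exp t * (-r₂ t + max (δ * (r₂ t - r₁ t)) 0)) := by
      simp only [hg'def]
      exact Prod.ext (by ring) (by ring)
    rw [heq]
    exact d1.prodMk d2
  -- Lipschitz bound on the derivative
  have hbound : ∀ t ≥ (0:ℝ), ‖g' t‖ ≤ 2 * δ * ‖g t‖ := by
    intro t ht
    have hexp : (0:ℝ) < Real.exp t := Real.exp_pos t
    have hnx : |Real.exp t * (r₁ t - c)| ≤ ‖g t‖ := by
      have := norm_fst_le (g t); simpa [hg, Real.norm_eq_abs, abs_mul, abs_of_pos hexp] using this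
    have hny : |Real.exp t * r₂ t| ≤ ‖g t‖ := by
      have := norm_snd_le (g t); simpa [hg, Real.norm_eq_abs, abs_mul, abs_of_pos hexp] using this
    have key : ∀ u : ℝ, |u| ≤ δ * |(r₁ t - c) - r₂ t| → |Real.exp t * u| ≤ 2 * δ * ‖g t‖ := by
      intro u hu
      have h1 : |Real.exp t * u| = Real.exp t * |u| := by
        rw [abs_mul, abs_of_pos hexp]
      have h2 : |(r₁ t - c) - r₂ t| ≤ |r₁ t - c| + |r₂ t| := abs_sub _ _
      have h3 : Real.exp t * |u| ≤ δ * (Real.exp t * |r₁ t - c| + Real.exp t * |r₂ t|) := by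
        have hu2 : |u| ≤ δ * (|r₁ t - c| + |r₂ t|) :=
          le_trans hu (mul_le_mul_of_nonneg_left h2 hδ0.le)
        calc Real.exp t * |u| ≤ Real.exp t * (δ * (|r₁ t - c| + |r₂ t|)) :=
              mul_le_mul_of_nonneg_left hu2 hexp.le
          _ = δ * (Real.exp t * |r₁ t - c| + Real.exp t * |r₂ t|) := by ring
      have h4 : Real.exp t * |r₁ t - c| = |Real.exp t * (r₁ t - c)| := by
        rw [abs_mul, abs_of_pos hexp]
      have h5 : Real.exp t * |r₂ t| = |Real.exp t * r₂ t| := by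
        rw [abs_mul, abs_of_pos hexp]
      rw [h1]
      calc Real.exp t * |u| ≤ δ * (Real.exp t * |r₁ t - c| + Real.exp t * |r₂ t|) := h3
        _ ≤ δ * (‖g t‖ + ‖g t‖) := by
            rw [h4, h5]; exact mul_le_mul_of_nonneg_left (add_le_add hnx hny) hδ0.le
        _ = 2 * δ * ‖g t‖ := by ring
    have comp1 : |max (δ * (r₁ t - r₂ t) + V₁) 0 - c| ≤ δ * |(r₁ t - c) - r₂ t| := by
      have : c = max (δ * c + V₁) 0 := by
        rw [hceq, max_eq_left hcpos.le]
      nth_rewrite 1 [this]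
      calc |max (δ * (r₁ t - r₂ t) + V₁) 0 - max (δ * c + V₁) 0|
          ≤ |(δ * (r₁ t - r₂ t) + V₁) - (δ * c + V₁)| := abs_max_sub_max_le_abs _ _ _
        _ = |δ * ((r₁ t - c) - r₂ t)| := by congr 1; ring
        _ = δ * |(r₁ t - c) - r₂ t| := by rw [abs_mul, abs_of_pos hδ0]
    have comp2 : |max (δ * (r₂ t - r₁ t)) 0| ≤ δ * |(r₁ t - c) - r₂ t| := by
      have h0 : max (δ * (0 - c)) 0 = 0 := max_eq_right (by nlinarith)
      calc |max (δ * (r₂ t - r₁ t)) 0|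
          = |max (δ * (r₂ t - r₁ t)) 0 - max (δ * (0 - c)) 0| := by rw [h0, sub_zero]
        _ ≤ |(δ * (r₂ t - r₁ t)) - (δ * (0 - c))| := abs_max_sub_max_le_abs _ _ _
        _ = |δ * ((r₁ t - c) - r₂ t)| := by rw [← abs_neg]; congr 1; ring
        _ = δ * |(r₁ t - c) - r₂ t| := by rw [abs_mul, abs_of_pos hδ0]
    rw [hg'def, Prod.norm_def]
    simp only [Real.norm_eq_abs]
    exact max_le (key _ comp1) (key _ comp2)
  -- Grönwall
  have hgron : ∀ t ≥ (0:ℝ), ‖g t‖ ≤ ‖g 0‖ * Real.exp (2 * δ * t) := by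
    intro t ht
    have hcont : ContinuousOn g (Set.Icc 0 t) := by
      intro s hs
      exact ((hg' s hs.1).continuousAt).continuousWithinAt
    have := norm_le_gronwallBound_of_norm_deriv_right_le (f := g) (f' := g')
      (δ := ‖g 0‖) (K := 2 * δ) (ε := 0) (a := 0) (b := t) hcont
      (fun s hs => (hg' s hs.1).hasDerivWithinAt) le_rfl
      (fun s hs => by simpa using hbound s hs.1)
    have h := this t (Set.mem_Icc.2 ⟨ht, le_rfl⟩)
    rwa [gronwallBound_ε0, sub_zero] at h
  -- deviation bound
  have hdev : ∀ t ≥ (0:ℝ), ‖(r₁ t, r₂ t) - (c, 0)‖ ≤ ‖g 0‖ * Real.exp ((2 * δ - 1) * t) := by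
    intro t ht
    have hexp : (0:ℝ) < Real.exp t := Real.exp_pos t
    have h0 : ‖g t‖ = Real.exp t * ‖(r₁ t, r₂ t) - (c, 0)‖ := by
      rw [hg, Prod.norm_def, Prod.norm_def]
      simp only [Prod.fst_sub, Prod.snd_sub, Real.norm_eq_abs]
      rw [abs_mul, abs_mul, abs_of_pos hexp, ← mul_max_of_nonneg _ _ hexp.le]
      simp
    have h1 := hgron t ht
    rw [h0] at h1
    have : ‖(r₁ t, r₂ t) - (c, 0)‖ ≤ ‖g 0‖ * Real.exp (2 * δ * t) / Real.exp t := by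
      rw [le_div_iff₀ hexp]; linarith [h1]
    calc ‖(r₁ t, r₂ t) - (c, 0)‖ ≤ ‖g 0‖ * Real.exp (2 * δ * t) / Real.exp t := this
      _ = ‖g 0‖ * Real.exp ((2 * δ - 1) * t) := by
          rw [mul_div_assoc, ← Real.exp_sub]; ring_nf
  -- conclude
  rw [tendsto_iff_norm_sub_tendsto_zero]
  have hrhs : Tendsto (fun t => ‖g 0‖ * Real.exp ((2 * δ - 1) * t)) atTop (nhds 0) := by
    have hk : Tendsto (fun t : ℝ => (2 * δ - 1) * t) atTop atBot := by
      apply tendsto_id.const_mul_atTop_of_neg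
      linarith
    have := Real.tendsto_exp_atBot.comp hk
    simpa using this.const_mul ‖g 0‖
  apply squeeze_zero' (g := fun t => ‖g 0‖ * Real.exp ((2 * δ - 1) * t))
  · exact Eventually.of_forall fun t => norm_nonneg _
  · filter_upwards [eventually_ge_atTop (0:ℝ)] with t ht using hdev t ht
  · exact hrhs
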